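/- Let a < b and let K be the third-order Peano kernel for Boole's rule (piecewise cubic with pieces K₁(t) = t³/6 − ((83a+7b)/180)t² + (19a²/45 + 7ab/90)t − a²(23a+7b)/180 on [a,(3a+b)/4], K₂(t) = t³/6 − ((17a+13b)/60)t² + (7a²/45 + 23ab/90 + 4b²/45)t − (a³/36 + 13a²b/180 + ab²/18 + b³/90) on ((3a+b)/4,(a+b)/2], K₃(t) = t³/6 − ((13a+17b)/60)t² + ((a+2b)(8a+7b)/90)t − (a³/90 + a²b/18 + 13ab²/180 + b³/36) on ((a+b)/2,(a+3b)/4], K₄(t) = t³/6 − ((7a+83b)/180)t² + (b(7a+38b)/90)t − b²(7a+23b)/180 on ((a+3b)/4,b]). If f : [a,b] → ℝ is twice differentiable with f'' absolutely continuous, then ∫_a^b K(t) f'''(t) dt = ((b−a)/90)·(7f(a) + 32f((3a+b)/4) + 12f((a+b)/2) + 32f((a+3b)/4) + 7f(b)) − ∫_a^b f(t) dt. -/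

import Mathlib

open MeasureTheory intervalIntegral Set

lemma boole_stepA (a b : ℝ) (f'' f''' : ℝ → ℝ)
    (hint : MeasureTheory.IntegrableOn f''' (Set.Icc a b))
    (hac : ∀ x ∈ Set.Icc a b, f'' x - f'' a = ∫ t in a..x, f''' t)
    (c d : ℝ) (hc : a ≤ c) (hcd : c ≤ d) (hdb : d ≤ b)
    (P Q : ℝ → ℝ) (hP : ∀ t, HasDerivAt P (Q t) t) (hQ : Continuous Q) :
    ∫ t in c..d, Q t * f'' t
      = P d * f'' d - P c * f'' c - ∫ t in c..d, P t * f''' t := by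
  have hPc : Continuous P := by
    have : Differentiable ℝ P := fun t => (hP t).differentiableAt
    exact this.continuous
  have h3 : ∀ u v : ℝ, a ≤ u → u ≤ b → a ≤ v → v ≤ b →
      IntervalIntegrable f''' MeasureTheory.volume u v := by
    intro u v h1 h2 h3' h4
    rw [intervalIntegrable_iff]
    exact hint.mono_set ((Set.uIoc_subset_uIcc ..).trans (Set.uIcc_subset_Icc ⟨h1, h2⟩ ⟨h3', h4⟩))
  have hf'' : ∀ s, c ≤ s → s ≤ d → f'' s = f'' c + ∫ t in c..s, f''' t := by
    intro s h1 h2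
    have e1 := hac s ⟨le_trans hc h1, le_trans h2 hdb⟩
    have e2 := hac c ⟨hc, le_trans hcd hdb⟩
    have e3 : (∫ t in a..c, f''' t) + ∫ t in c..s, f''' t = ∫ t in a..s, f''' t :=
      integral_add_adjacent_intervals (h3 a c le_rfl (le_trans hc (le_trans hcd hdb)) hc
        (le_trans hcd hdb)) (h3 c s hc (le_trans hcd hdb) (le_trans hc h1) (le_trans h2 hdb))
    linarith
  have int1 : IntervalIntegrable (fun s => Q s * f'' c) MeasureTheory.volume c d :=
    (hQ.mul continuous_const).intervalIntegrable c d
  have int2 : IntervalIntegrable (fun s => Q s * ∫ t in c..s, f''' t)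
      MeasureTheory.volume c d := by
    apply ContinuousOn.intervalIntegrable
    exact hQ.continuousOn.mul (continuousOn_primitive_interval'
      (h3 c d hc (le_trans hcd hdb) (le_trans hc hcd) hdb) left_mem_uIcc)
  have hQint : ∫ t in c..d, Q t = P d - P c :=
    integral_eq_sub_of_hasDerivAt (fun t _ => hP t) (hQ.intervalIntegrable c d)
  have L1 : (∫ t in c..d, Q t * f'' t)
      = (∫ s in c..d, Q s * f'' c) + ∫ s in c..d, Q s * ∫ t in c..s, f''' t := by
    rw [← integral_add int1 int2]
    apply integral_congr
    intro s hs
    rw [Set.uIcc_of_le hcd] at hs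
    show Q s * f'' s = Q s * f'' c + Q s * ∫ t in c..s, f''' t
    rw [hf'' s hs.1 hs.2]; ring
  have L2 : (∫ s in c..d, Q s * f'' c) = (P d - P c) * f'' c := by
    rw [intervalIntegral.integral_mul_const, hQint]
  -- the Fubini part
  set μ := MeasureTheory.volume.restrict (Set.Ioc c d) with hμ
  set G : ℝ × ℝ → ℝ := {p : ℝ × ℝ | p.2 ≤ p.1}.indicator (fun p => Q p.1 * f''' p.2) with hG
  haveI : IsFiniteMeasure μ := by
    constructor
    rw [hμ, Measure.restrict_apply MeasurableSet.univ, Set.univ_inter, Real.volume_Ioc]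
    exact ENNReal.ofReal_lt_top
  have h3μ : MeasureTheory.Integrable f''' μ :=
    hint.mono_set (fun x hx => ⟨le_trans hc hx.1.le, le_trans hx.2 hdb⟩)
  have hQμ : MeasureTheory.Integrable Q μ := hQ.integrableOn_Ioc
  have hGint : MeasureTheory.Integrable G (μ.prod μ) :=
    (hQμ.mul_prod h3μ).indicator (measurableSet_le measurable_snd measurable_fst)
  have inner1 : ∀ s ∈ Set.Ioc c d, (∫ t, G (s, t) ∂μ) = Q s * ∫ t in c..s, f''' t := by
    intro s hs
    have e : (fun t => G (s, t)) = (Set.Iic s).indicator (fun t => Q s * f''' t) := by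
      ext t
      by_cases h : t ≤ s <;> simp [hG, Set.indicator, h]
    rw [e, MeasureTheory.integral_indicator measurableSet_Iic, hμ,
      Measure.restrict_restrict measurableSet_Iic, Set.Iic_inter_Ioc_of_le hs.2,
      MeasureTheory.integral_const_mul, intervalIntegral.integral_of_le hs.1.le]
  have inner2 : ∀ t ∈ Set.Ioc c d, (∫ s, G (s, t) ∂μ) = (P d - P t) * f''' t := by
    intro t ht
    have e : (fun s => G (s, t)) = (Set.Ici t).indicator (fun s => Q s * f''' t) := by
      ext s
      by_cases h : t ≤ s <;> simp [hG, Set.indicator, h]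
    have e2 : Set.Ici t ∩ Set.Ioc c d = Set.Icc t d := by
      ext x
      simp only [Set.mem_inter_iff, Set.mem_Ici, Set.mem_Ioc, Set.mem_Icc]
      constructor
      · rintro ⟨h1, _, h3'⟩; exact ⟨h1, h3'⟩
      · rintro ⟨h1, h2⟩; exact ⟨h1, lt_of_lt_of_le ht.1 h1, h2⟩
    rw [e, MeasureTheory.integral_indicator measurableSet_Ici, hμ,
      Measure.restrict_restrict measurableSet_Ici, e2,
      MeasureTheory.integral_mul_const, MeasureTheory.integral_Icc_eq_integral_Ioc,
      ← intervalIntegral.integral_of_le ht.2]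
    rw [integral_eq_sub_of_hasDerivAt (fun x _ => hP x) (hQ.intervalIntegrable t d)]
  have L3 : (∫ s in c..d, Q s * ∫ t in c..s, f''' t)
      = P d * (f'' d - f'' c) - ∫ t in c..d, P t * f''' t := by
    have swap := MeasureTheory.integral_integral_swap (f := fun s t => G (s, t))
      (μ := μ) (ν := μ) hGint
    calc (∫ s in c..d, Q s * ∫ t in c..s, f''' t)
        = ∫ s, (∫ t, G (s, t) ∂μ) ∂μ := by
          rw [intervalIntegral.integral_of_le hcd]
          exact (MeasureTheory.setIntegral_congr_fun measurableSet_Ioc inner1).symm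
      _ = ∫ t, (∫ s, G (s, t) ∂μ) ∂μ := swap
      _ = ∫ t in Set.Ioc c d, (P d - P t) * f''' t :=
          MeasureTheory.setIntegral_congr_fun measurableSet_Ioc inner2
      _ = ∫ t in c..d, (P d - P t) * f''' t := (intervalIntegral.integral_of_le hcd).symm
      _ = P d * (f'' d - f'' c) - ∫ t in c..d, P t * f''' t := by
          have i1 : IntervalIntegrable (fun t => P d * f''' t) MeasureTheory.volume c d :=
            (h3 c d hc (le_trans hcd hdb) (le_trans hc hcd) hdb).const_mul (P d)
          have i2 : IntervalIntegrable (fun t => P t * f''' t) MeasureTheory.volume c d :=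
            (h3 c d hc (le_trans hcd hdb) (le_trans hc hcd) hdb).continuousOn_mul
              hPc.continuousOn
          have : (∫ t in c..d, (P d - P t) * f''' t)
              = (∫ t in c..d, P d * f''' t) - ∫ t in c..d, P t * f''' t := by
            rw [← integral_sub i1 i2]
            congr 1; ext t; ring
          rw [this, intervalIntegral.integral_const_mul]
          have : (∫ t in c..d, f''' t) = f'' d - f'' c := by
            have := hf'' d hcd le_rfl
            linarith
          rw [this]
  rw [L1, L2, L3]
  ring


lemma boole_parts (a b : ℝ) (f f' f'' f''' : ℝ → ℝ)
    (hderiv : ∀ x ∈ Set.Icc a b, HasDerivAt f (f' x) x)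
    (hderiv' : ∀ x ∈ Set.Icc a b, HasDerivAt f' (f'' x) x)
    (hint : MeasureTheory.IntegrableOn f''' (Set.Icc a b))
    (hac : ∀ x ∈ Set.Icc a b, f'' x - f'' a = ∫ t in a..x, f''' t)
    (hc'' : ContinuousOn f'' (Set.Icc a b))
    (c d : ℝ) (hc : a ≤ c) (hcd : c ≤ d) (hdb : d ≤ b) (p q r : ℝ)
     :
    ∫ t in c..d, (t^3/6 + p*t^2 + q*t + r) * f''' t
      = ((d^3/6 + p*d^2 + q*d + r) * f'' d - (c^3/6 + p*c^2 + q*c + r) * f'' c)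
        - ((d^2/2 + 2*p*d + q) * f' d - (c^2/2 + 2*p*c + q) * f' c)
        + ((d + 2*p) * f d - (c + 2*p) * f c)
        - ∫ t in c..d, f t := by
  have hsub : Set.uIcc c d ⊆ Set.Icc a b := by
    rw [Set.uIcc_of_le hcd]
    exact Set.Icc_subset_Icc hc hdb
  have hP : ∀ t : ℝ, HasDerivAt (fun t => t^3/6 + p*t^2 + q*t + r) (t^2/2 + 2*p*t + q) t := by
    intro t
    have h := ((((hasDerivAt_pow 3 t).div_const 6).add
      ((hasDerivAt_pow 2 t).const_mul p)).add ((hasDerivAt_id t).const_mul q)).add_const r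
    refine h.congr_deriv ?_
    push_cast
    ring
  have hQ : ∀ t : ℝ, HasDerivAt (fun t => t^2/2 + 2*p*t + q) (t + 2*p) t := by
    intro t
    have h := (((hasDerivAt_pow 2 t).div_const 2).add
      ((hasDerivAt_id t).const_mul (2*p))).add_const q
    refine h.congr_deriv ?_
    push_cast
    ring
  have hQcont : Continuous (fun t : ℝ => t^2/2 + 2*p*t + q) := by fun_prop
  have stepA := boole_stepA a b f'' f''' hint hac c d hc hcd hdb
    (fun t => t^3/6 + p*t^2 + q*t + r) (fun t => t^2/2 + 2*p*t + q) hP hQcont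
  have hcf' : ContinuousOn f' (Set.Icc a b) := fun x hx =>
    (hderiv' x hx).continuousAt.continuousWithinAt
  have hcf : ContinuousOn f (Set.Icc a b) := fun x hx =>
    (hderiv x hx).continuousAt.continuousWithinAt
  have stepB := integral_mul_deriv_eq_deriv_mul (a := c) (b := d)
    (u := fun t => t^2/2 + 2*p*t + q) (u' := fun t => t + 2*p) (v := f') (v' := f'')
    (fun x _ => hQ x) (fun x hx => hderiv' x (hsub hx))
    (by apply Continuous.intervalIntegrable; fun_prop)
    ((hc''.mono hsub).intervalIntegrable)
  have stepC := integral_mul_deriv_eq_deriv_mul (a := c) (b := d)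
    (u := fun t => t + 2*p) (u' := fun _ => (1:ℝ)) (v := f) (v' := f')
    (fun x _ => by simpa using (hasDerivAt_id x).add_const (2*p))
    (fun x hx => hderiv x (hsub hx))
    (by apply Continuous.intervalIntegrable; fun_prop)
    ((hcf'.mono hsub).intervalIntegrable)
  simp only [one_mul] at stepC
  linarith [stepA, stepB, stepC]

theorem boole_kernel3_identity (a b : ℝ) (hab : a < b) (K : ℝ → ℝ)
    (hK1 : ∀ t ∈ Set.Icc a ((3*a+b)/4), K t = t^3/6 - (83*a+7*b)/180*t^2 + (19*a^2/45 + 7*a*b/90)*t - a^2*(23*a+7*b)/180)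
    (hK2 : ∀ t ∈ Set.Ioc ((3*a+b)/4) ((a+b)/2), K t = t^3/6 - (17*a+13*b)/60*t^2 + (7*a^2/45 + 23*a*b/90 + 4*b^2/45)*t - (a^3/36 + 13*a^2*b/180 + a*b^2/18 + b^3/90))
    (hK3 : ∀ t ∈ Set.Ioc ((a+b)/2) ((a+3*b)/4), K t = t^3/6 - (13*a+17*b)/60*t^2 + (a+2*b)*(8*a+7*b)/90*t - (a^3/90 + a^2*b/18 + 13*a*b^2/180 + b^3/36))
    (hK4 : ∀ t ∈ Set.Ioc ((a+3*b)/4) b, K t = t^3/6 - (7*a+83*b)/180*t^2 + b*(7*a+38*b)/90*t - b^2*(7*a+23*b)/180)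
    (f f' f'' f''' : ℝ → ℝ)
    (hderiv : ∀ x ∈ Set.Icc a b, HasDerivAt f (f' x) x)
    (hderiv' : ∀ x ∈ Set.Icc a b, HasDerivAt f' (f'' x) x)
    (hint : MeasureTheory.IntegrableOn f''' (Set.Icc a b))
    (hac : ∀ x ∈ Set.Icc a b, f'' x - f'' a = ∫ t in a..x, f''' t)
    : (∫ t in a..b, K t * f''' t) = (b - a)/90 * (7*f a + 32*f ((3*a+b)/4) + 12*f ((a+b)/2) + 32*f ((a+3*b)/4) + 7*f b) - ∫ t in a..b, f t := by
  have h01 : a ≤ (3*a+b)/4 := by linarith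
  have h12 : (3*a+b)/4 ≤ (a+b)/2 := by linarith
  have h23 : (a+b)/2 ≤ (a+3*b)/4 := by linarith
  have h34 : (a+3*b)/4 ≤ b := by linarith
  have h02 : a ≤ (a+b)/2 := by linarith
  have h03 : a ≤ (a+3*b)/4 := by linarith
  have h1b : (3*a+b)/4 ≤ b := by linarith
  have h2b : (a+b)/2 ≤ b := by linarith
  -- continuity of f''
  have hc'' : ContinuousOn f'' (Set.Icc a b) := by
    have hcont : ContinuousOn (fun x => f'' a + ∫ t in Set.Ioc a x, f''' t) (Set.Icc a b) :=
      continuousOn_const.add (continuousOn_primitive hint)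
    apply hcont.congr
    intro x hx
    have := hac x hx
    rw [intervalIntegral.integral_of_le hx.1] at this
    dsimp only
    linarith
  have hcf : ContinuousOn f (Set.Icc a b) := fun x hx =>
    (hderiv x hx).continuousAt.continuousWithinAt
  have h3ii : ∀ u v : ℝ, a ≤ u → u ≤ b → a ≤ v → v ≤ b →
      IntervalIntegrable f''' MeasureTheory.volume u v := by
    intro u v hu1 hu2 hv1 hv2
    rw [intervalIntegrable_iff]
    exact hint.mono_set ((Set.uIoc_subset_uIcc ..).trans
      (Set.uIcc_subset_Icc ⟨hu1, hu2⟩ ⟨hv1, hv2⟩))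
  -- the four polynomial pieces in normal form
  set P1 : ℝ → ℝ := fun t => t^3/6 + (-((83*a+7*b)/180))*t^2 + (19*a^2/45 + 7*a*b/90)*t
    + (-(a^2*(23*a+7*b)/180)) with hP1
  set P2 : ℝ → ℝ := fun t => t^3/6 + (-((17*a+13*b)/60))*t^2 + (7*a^2/45 + 23*a*b/90 + 4*b^2/45)*t
    + (-(a^3/36 + 13*a^2*b/180 + a*b^2/18 + b^3/90)) with hP2
  set P3 : ℝ → ℝ := fun t => t^3/6 + (-((13*a+17*b)/60))*t^2 + ((a+2*b)*(8*a+7*b)/90)*t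
    + (-(a^3/90 + a^2*b/18 + 13*a*b^2/180 + b^3/36)) with hP3
  set P4 : ℝ → ℝ := fun t => t^3/6 + (-((7*a+83*b)/180))*t^2 + (b*(7*a+38*b)/90)*t
    + (-(b^2*(7*a+23*b)/180)) with hP4
  have hP1c : Continuous P1 := by rw [hP1]; fun_prop
  have hP2c : Continuous P2 := by rw [hP2]; fun_prop
  have hP3c : Continuous P3 := by rw [hP3]; fun_prop
  have hP4c : Continuous P4 := by rw [hP4]; fun_prop
  -- integrability of the pieces
  have IP1 : IntervalIntegrable (fun t => P1 t * f''' t) MeasureTheory.volume a ((3*a+b)/4) :=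
    (h3ii a ((3*a+b)/4) le_rfl hab.le h01 h1b).continuousOn_mul hP1c.continuousOn
  have IP2 : IntervalIntegrable (fun t => P2 t * f''' t) MeasureTheory.volume ((3*a+b)/4) ((a+b)/2) :=
    (h3ii _ _ h01 h1b h02 h2b).continuousOn_mul hP2c.continuousOn
  have IP3 : IntervalIntegrable (fun t => P3 t * f''' t) MeasureTheory.volume ((a+b)/2) ((a+3*b)/4) :=
    (h3ii _ _ h02 h2b h03 (by linarith)).continuousOn_mul hP3c.continuousOn
  have IP4 : IntervalIntegrable (fun t => P4 t * f''' t) MeasureTheory.volume ((a+3*b)/4) b :=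
    (h3ii _ _ h03 (by linarith) (by linarith) le_rfl).continuousOn_mul hP4c.continuousOn
  -- K agrees with the pieces on the open-closed intervals
  have eq1 : Set.EqOn (fun t => K t * f''' t) (fun t => P1 t * f''' t) (Set.Ioc a ((3*a+b)/4)) := by
    intro t ht
    simp only [hP1]
    rw [hK1 t (Set.Ioc_subset_Icc_self ht)]
    ring
  have eq2 : Set.EqOn (fun t => K t * f''' t) (fun t => P2 t * f''' t)
      (Set.Ioc ((3*a+b)/4) ((a+b)/2)) := by
    intro t ht
    simp only [hP2]
    rw [hK2 t ht]
    ring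
  have eq3 : Set.EqOn (fun t => K t * f''' t) (fun t => P3 t * f''' t)
      (Set.Ioc ((a+b)/2) ((a+3*b)/4)) := by
    intro t ht
    simp only [hP3]
    rw [hK3 t ht]
    ring
  have eq4 : Set.EqOn (fun t => K t * f''' t) (fun t => P4 t * f''' t)
      (Set.Ioc ((a+3*b)/4) b) := by
    intro t ht
    simp only [hP4]
    rw [hK4 t ht]
    ring
  have I1 : IntervalIntegrable (fun t => K t * f''' t) MeasureTheory.volume a ((3*a+b)/4) := by
    rw [intervalIntegrable_iff_integrableOn_Ioc_of_le h01]
    exact ((intervalIntegrable_iff_integrableOn_Ioc_of_le h01).1 IP1).congr_fun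
      (fun t ht => (eq1 ht).symm) measurableSet_Ioc
  have I2 : IntervalIntegrable (fun t => K t * f''' t) MeasureTheory.volume ((3*a+b)/4) ((a+b)/2) := by
    rw [intervalIntegrable_iff_integrableOn_Ioc_of_le h12]
    exact ((intervalIntegrable_iff_integrableOn_Ioc_of_le h12).1 IP2).congr_fun
      (fun t ht => (eq2 ht).symm) measurableSet_Ioc
  have I3 : IntervalIntegrable (fun t => K t * f''' t) MeasureTheory.volume ((a+b)/2) ((a+3*b)/4) := by
    rw [intervalIntegrable_iff_integrableOn_Ioc_of_le h23]
    exact ((intervalIntegrable_iff_integrableOn_Ioc_of_le h23).1 IP3).congr_fun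
      (fun t ht => (eq3 ht).symm) measurableSet_Ioc
  have I4 : IntervalIntegrable (fun t => K t * f''' t) MeasureTheory.volume ((a+3*b)/4) b := by
    rw [intervalIntegrable_iff_integrableOn_Ioc_of_le h34]
    exact ((intervalIntegrable_iff_integrableOn_Ioc_of_le h34).1 IP4).congr_fun
      (fun t ht => (eq4 ht).symm) measurableSet_Ioc
  -- piecewise integral computations
  have e1 : ∫ t in a..((3*a+b)/4), K t * f''' t = ∫ t in a..((3*a+b)/4), P1 t * f''' t := by
    rw [intervalIntegral.integral_of_le h01, intervalIntegral.integral_of_le h01]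
    exact MeasureTheory.setIntegral_congr_fun measurableSet_Ioc eq1
  have e2 : ∫ t in ((3*a+b)/4)..((a+b)/2), K t * f''' t
      = ∫ t in ((3*a+b)/4)..((a+b)/2), P2 t * f''' t := by
    rw [intervalIntegral.integral_of_le h12, intervalIntegral.integral_of_le h12]
    exact MeasureTheory.setIntegral_congr_fun measurableSet_Ioc eq2
  have e3 : ∫ t in ((a+b)/2)..((a+3*b)/4), K t * f''' t
      = ∫ t in ((a+b)/2)..((a+3*b)/4), P3 t * f''' t := by
    rw [intervalIntegral.integral_of_le h23, intervalIntegral.integral_of_le h23]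
    exact MeasureTheory.setIntegral_congr_fun measurableSet_Ioc eq3
  have e4 : ∫ t in ((a+3*b)/4)..b, K t * f''' t = ∫ t in ((a+3*b)/4)..b, P4 t * f''' t := by
    rw [intervalIntegral.integral_of_le h34, intervalIntegral.integral_of_le h34]
    exact MeasureTheory.setIntegral_congr_fun measurableSet_Ioc eq4
  -- splitting the integral of K * f'''
  have split : (∫ t in a..b, K t * f''' t)
      = (∫ t in a..((3*a+b)/4), K t * f''' t) + (∫ t in ((3*a+b)/4)..((a+b)/2), K t * f''' t)
        + (∫ t in ((a+b)/2)..((a+3*b)/4), K t * f''' t)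
        + (∫ t in ((a+3*b)/4)..b, K t * f''' t) := by
    rw [intervalIntegral.integral_add_adjacent_intervals I1 I2,
      intervalIntegral.integral_add_adjacent_intervals (I1.trans I2) I3,
      intervalIntegral.integral_add_adjacent_intervals ((I1.trans I2).trans I3) I4]
  -- splitting the integral of f
  have If1 : IntervalIntegrable f MeasureTheory.volume a ((3*a+b)/4) :=
    (hcf.mono (Set.uIcc_subset_Icc ⟨le_rfl, by linarith⟩ ⟨h01, h1b⟩)).intervalIntegrable
  have If2 : IntervalIntegrable f MeasureTheory.volume ((3*a+b)/4) ((a+b)/2) :=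
    (hcf.mono (Set.uIcc_subset_Icc ⟨h01, h1b⟩ ⟨h02, h2b⟩)).intervalIntegrable
  have If3 : IntervalIntegrable f MeasureTheory.volume ((a+b)/2) ((a+3*b)/4) :=
    (hcf.mono (Set.uIcc_subset_Icc ⟨h02, h2b⟩ ⟨h03, by linarith⟩)).intervalIntegrable
  have If4 : IntervalIntegrable f MeasureTheory.volume ((a+3*b)/4) b :=
    (hcf.mono (Set.uIcc_subset_Icc ⟨h03, by linarith⟩ ⟨by linarith, le_rfl⟩)).intervalIntegrable
  have splitf : (∫ t in a..((3*a+b)/4), f t) + (∫ t in ((3*a+b)/4)..((a+b)/2), f t)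
        + (∫ t in ((a+b)/2)..((a+3*b)/4), f t) + (∫ t in ((a+3*b)/4)..b, f t)
      = ∫ t in a..b, f t := by
    rw [intervalIntegral.integral_add_adjacent_intervals If1 If2,
      intervalIntegral.integral_add_adjacent_intervals (If1.trans If2) If3,
      intervalIntegral.integral_add_adjacent_intervals ((If1.trans If2).trans If3) If4]
  -- integration by parts on each piece
  have p1 := boole_parts a b f f' f'' f''' hderiv hderiv' hint hac hc''
    a ((3*a+b)/4) le_rfl h01 h1b (-((83*a+7*b)/180)) (19*a^2/45 + 7*a*b/90)
    (-(a^2*(23*a+7*b)/180))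
  have p2 := boole_parts a b f f' f'' f''' hderiv hderiv' hint hac hc''
    ((3*a+b)/4) ((a+b)/2) h01 h12 h2b (-((17*a+13*b)/60)) (7*a^2/45 + 23*a*b/90 + 4*b^2/45)
    (-(a^3/36 + 13*a^2*b/180 + a*b^2/18 + b^3/90))
  have p3 := boole_parts a b f f' f'' f''' hderiv hderiv' hint hac hc''
    ((a+b)/2) ((a+3*b)/4) h02 h23 h34 (-((13*a+17*b)/60)) ((a+2*b)*(8*a+7*b)/90)
    (-(a^3/90 + a^2*b/18 + 13*a*b^2/180 + b^3/36))
  have p4 := boole_parts a b f f' f'' f''' hderiv hderiv' hint hac hc''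
    ((a+3*b)/4) b h03 h34 le_rfl (-((7*a+83*b)/180)) (b*(7*a+38*b)/90)
    (-(b^2*(7*a+23*b)/180))
  rw [split, e1, e2, e3, e4]
  simp only [hP1, hP2, hP3, hP4]
  rw [p1, p2, p3, p4]
  linear_combination -splitf
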